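/- Proposition 5.7 (master inequality for deterministic PDG): Run the PDG iteration with parameters τ_t, η_t, α_t ≥ 0 and weights θ_t ≥ 0 (t = 1, …, k) satisfying θ_t·τ_t ≤ θ_{t−1}(1 + τ_{t−1}) and θ_t·η_t ≤ θ_{t−1}(μ + η_{t−1}) for t = 2, …, k, η_{t−1}·τ_t ≥ 2L_f·α_t for t = 2, …, k, η_k(1 + τ_k) ≥ 2L_f, and α_t = θ_{t−1}/θ_t for t = 2, …, k. Let z̄^k = (x̄^k, ḡ^k) = (Σ_{t=1}^k θ_t)^{-1} Σ_{t=1}^k θ_t(x^t, g^t) and D_f(g^0, g) := J_f(g) − J_f(g^0) − ⟨x^0, g − g^0⟩. Then for every k ≥ 1, every x ∈ X, and every g with J_f(g) < +∞: (Σ_{t=1}^k θ_t)·Q_f(z̄^k, (x, g)) + θ_k(μ + η_k)·P(x^k, x) ≤ θ_1·η_1·P(x^0, x) + θ_1·τ_1·D_f(g^0, g). -/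

import Mathlib

open scoped RealInnerProductSpace

variable {E : Type*} [NormedAddCommGroup E] [InnerProductSpace ℝ E] [CompleteSpace E]

/-- derivative of `f` along a line, from gradients. -/
theorem pdg_line_hasDerivAt (f : E → ℝ) (f' : E → E) (hf : ∀ u, HasGradientAt f (f' u) u)
    (a d : E) (t : ℝ) :
    HasDerivAt (fun s : ℝ => f (a + s • d)) ⟪f' (a + t • d), d⟫ t := by
  have hline : HasDerivAt (fun s : ℝ => a + s • d) d t := by
    simpa using ((hasDerivAt_id t).smul_const d).const_add a
  have hg := (hf (a + t • d)).hasFDerivAt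
  have := hg.comp_hasDerivAt t hline
  simp at this
  exact this

theorem pdg_slope_limit (φ : ℝ → ℝ) (c C : ℝ) (hd : HasDerivAt φ c 0)
    (hb : ∀ s ∈ Set.Ioc (0:ℝ) 1, φ s - φ 0 ≤ s * C) : c ≤ C := by
  have hs : Filter.Tendsto (slope φ 0) (nhdsWithin 0 (Set.Ioi 0)) (nhds c) :=
    (hasDerivAt_iff_tendsto_slope.1 hd).mono_left
      (nhdsWithin_mono _ (fun s hs => by simpa using ne_of_gt hs))
  refine le_of_tendsto hs ?_
  filter_upwards [Ioc_mem_nhdsGT (one_pos : (0:ℝ) < 1)] with s hs'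
  have h0 : 0 < s := hs'.1
  have := hb s hs'
  have : (φ s - φ 0) / (s - 0) ≤ C := by
    rw [sub_zero, div_le_iff₀ h0]; linarith [this]
  simpa [slope_def_field] using this

theorem pdg_grad_le (f : E → ℝ) (f' : E → E) (hconv : ConvexOn ℝ Set.univ f)
    (hf : ∀ u, HasGradientAt f (f' u) u) (x y : E) :
    f x + ⟪f' x, y - x⟫ ≤ f y := by
  have hd : HasDerivAt (fun s : ℝ => f (x + s • (y - x))) ⟪f' x, y - x⟫ 0 := by
    simpa using pdg_line_hasDerivAt f f' hf x (y - x) 0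
  have key : ⟪f' x, y - x⟫ ≤ f y - f x := by
    refine pdg_slope_limit _ _ _ hd ?_
    intro s hs
    have hcomb := hconv.2 (Set.mem_univ x) (Set.mem_univ y)
      (sub_nonneg.2 hs.2) (le_of_lt hs.1) (by ring)
    have hx : x + s • (y - x) = (1 - s) • x + s • y := by
      simp [smul_sub, sub_smul]; abel
    rw [hx]; simp only [zero_smul, add_zero]; simp only [smul_eq_mul] at hcomb; nlinarith [hcomb]
  linarith

theorem pdg_descent (f : E → ℝ) (f' : E → E) (L : ℝ) (hL : 0 ≤ L)
    (hf : ∀ u, HasGradientAt f (f' u) u)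
    (hfLip : ∀ u v, ‖f' u - f' v‖ ≤ L * ‖u - v‖) (x y : E) :
    f y ≤ f x + ⟪f' x, y - x⟫ + L / 2 * ‖y - x‖ ^ 2 := by
  set d := y - x with hd
  set r : ℝ → ℝ := fun t => f (x + t • d) - t * ⟪f' x, d⟫ - t ^ 2 * (L * ‖d‖ ^ 2) / 2 with hr
  have hder : ∀ t : ℝ, HasDerivAt r
      (⟪f' (x + t • d), d⟫ - ⟪f' x, d⟫ - t * (L * ‖d‖ ^ 2)) t := by
    intro t
    have h1 := pdg_line_hasDerivAt f f' hf x d t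
    have h2 : HasDerivAt (fun t : ℝ => t * ⟪f' x, d⟫) ⟪f' x, d⟫ t := by
      simpa using (hasDerivAt_id t).mul_const ⟪f' x, d⟫
    have h3 : HasDerivAt (fun t : ℝ => t ^ 2 * (L * ‖d‖ ^ 2) / 2)
        (t * (L * ‖d‖ ^ 2)) t := by
      have hh := ((hasDerivAt_pow 2 t).mul_const (L * ‖d‖ ^ 2)).div_const 2
      exact hh.congr_deriv (by rw [show (2:ℕ) - 1 = 1 from rfl, pow_one]; push_cast; ring)
    exact (h1.sub h2).sub h3
  have hanti : AntitoneOn r (Set.Icc 0 1) := by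
    apply antitoneOn_of_deriv_nonpos (convex_Icc 0 1)
    · exact fun t _ => (hder t).continuousAt.continuousWithinAt
    · exact fun t _ => (hder t).differentiableAt.differentiableWithinAt
    · intro t ht
      rw [interior_Icc] at ht
      rw [(hder t).deriv]
      have hCS : ⟪f' (x + t • d) - f' x, d⟫ ≤ ‖f' (x + t • d) - f' x‖ * ‖d‖ :=
        real_inner_le_norm _ _
      have hLip := hfLip (x + t • d) x
      have : ‖x + t • d - x‖ = t * ‖d‖ := by
        rw [add_sub_cancel_left, norm_smul, Real.norm_eq_abs, abs_of_pos ht.1]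
      rw [this] at hLip
      have hdot : ⟪f' (x + t • d) - f' x, d⟫ = ⟪f' (x + t • d), d⟫ - ⟪f' x, d⟫ :=
        inner_sub_left _ _ _
      nlinarith [norm_nonneg d, ht.1.le, mul_le_mul_of_nonneg_right hLip (norm_nonneg d)]
  have := hanti (Set.left_mem_Icc.2 zero_le_one) (Set.right_mem_Icc.2 zero_le_one) zero_le_one
  have h0 : r 0 = f x := by simp [hr]
  have h1 : r 1 = f y - ⟪f' x, d⟫ - L * ‖d‖ ^ 2 / 2 := by
    simp [hr, hd]
  rw [h0, h1] at this
  have hny : ‖y - x‖ ^ 2 = ‖d‖ ^ 2 := by rw [hd]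
  linarith [this]

theorem pdg_strong_lower (X : Set E) (hXconvex : Convex ℝ X) (w : E → ℝ) (w' : E → E)
    (hw : ∀ u, HasGradientAt w (w' u) u)
    (hstrong : ∀ u ∈ X, ∀ v ∈ X, (1 / 2) * ‖u - v‖ ^ 2 ≤ ⟪w' u - w' v, u - v⟫)
    (u v : E) (hu : u ∈ X) (hv : v ∈ X) :
    (1 / 4) * ‖u - v‖ ^ 2 ≤ w u - w v - ⟪w' v, u - v⟫ := by
  set d := u - v with hd
  set r : ℝ → ℝ := fun t => w (v + t • d) - t * ⟪w' v, d⟫ - t ^ 2 * ‖d‖ ^ 2 / 4 with hr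
  have hder : ∀ t : ℝ, HasDerivAt r
      (⟪w' (v + t • d), d⟫ - ⟪w' v, d⟫ - t * ‖d‖ ^ 2 / 2) t := by
    intro t
    have h1 := pdg_line_hasDerivAt w w' hw v d t
    have h2 : HasDerivAt (fun t : ℝ => t * ⟪w' v, d⟫) ⟪w' v, d⟫ t := by
      simpa using (hasDerivAt_id t).mul_const ⟪w' v, d⟫
    have h3 : HasDerivAt (fun t : ℝ => t ^ 2 * ‖d‖ ^ 2 / 4) (t * ‖d‖ ^ 2 / 2) t := by
      have hh := ((hasDerivAt_pow 2 t).mul_const (‖d‖ ^ 2)).div_const 4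
      exact hh.congr_deriv (by rw [show (2:ℕ) - 1 = 1 from rfl, pow_one]; push_cast; ring)
    exact (h1.sub h2).sub h3
  have hmono : MonotoneOn r (Set.Icc 0 1) := by
    apply monotoneOn_of_deriv_nonneg (convex_Icc 0 1)
    · exact fun t _ => (hder t).continuousAt.continuousWithinAt
    · exact fun t _ => (hder t).differentiableAt.differentiableWithinAt
    · intro t ht
      rw [interior_Icc] at ht
      rw [(hder t).deriv]
      have hmem : v + t • d ∈ X := by
        have : v + t • d = (1 - t) • v + t • u := by
          rw [hd]; simp [smul_sub, sub_smul]; abel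
        rw [this]
        exact hXconvex hv hu (by linarith [ht.2]) ht.1.le (by ring)
      have hs := hstrong (v + t • d) hmem v hv
      have : v + t • d - v = t • d := by abel
      rw [this] at hs
      have h1 : ⟪w' (v + t • d) - w' v, t • d⟫ = t * ⟪w' (v + t • d) - w' v, d⟫ :=
        real_inner_smul_right _ _ _
      have h2 : ‖t • d‖ ^ 2 = t ^ 2 * ‖d‖ ^ 2 := by
        rw [norm_smul, mul_pow, Real.norm_eq_abs, sq_abs]
      rw [h1, h2] at hs
      have h3 : ⟪w' (v + t • d) - w' v, d⟫ = ⟪w' (v + t • d), d⟫ - ⟪w' v, d⟫ :=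
        inner_sub_left _ _ _
      nlinarith [ht.1]
  have := hmono (Set.left_mem_Icc.2 zero_le_one) (Set.right_mem_Icc.2 zero_le_one) zero_le_one
  have h0 : r 0 = w v := by simp [hr]
  have h1 : r 1 = w u - ⟪w' v, d⟫ - ‖d‖ ^ 2 / 4 := by simp [hr, hd]
  rw [h0, h1] at this
  linarith [this]

theorem pdg_convexOn (X : Set E) (hXconvex : Convex ℝ X) (w : E → ℝ) (w' : E → E)
    (hw : ∀ u, HasGradientAt w (w' u) u)
    (hmono : ∀ u ∈ X, ∀ v ∈ X, (0:ℝ) ≤ ⟪w' u - w' v, u - v⟫) :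
    ConvexOn ℝ X w := by
  constructor
  · exact hXconvex
  intro u hu v hv a b ha hb hab
  set d := v - u with hd
  set q : ℝ → ℝ := fun t => w (u + t • d) with hq
  have hder : ∀ t : ℝ, HasDerivAt q ⟪w' (u + t • d), d⟫ t :=
    fun t => pdg_line_hasDerivAt w w' hw u d t
  have hmem : ∀ t : ℝ, t ∈ Set.Icc (0:ℝ) 1 → u + t • d ∈ X := by
    intro t ht
    have : u + t • d = (1 - t) • u + t • v := by
      rw [hd]; simp [smul_sub, sub_smul]; abel
    rw [this]
    exact hXconvex hu hv (by linarith [ht.2]) ht.1 (by ring)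
  have hqc : ConvexOn ℝ (Set.Icc (0:ℝ) 1) q := by
    apply MonotoneOn.convexOn_of_deriv (convex_Icc 0 1)
    · exact fun t _ => (hder t).continuousAt.continuousWithinAt
    · exact fun t ht => (hder t).differentiableAt.differentiableWithinAt
    · intro s hs t ht hst
      rw [interior_Icc] at hs ht
      rw [(hder s).deriv, (hder t).deriv]
      rcases eq_or_lt_of_le hst with heq | hlt
      · rw [heq]
      have hmo := hmono (u + t • d) (hmem t (Set.mem_Icc_of_Ioo ht))
        (u + s • d) (hmem s (Set.mem_Icc_of_Ioo hs))
      have hdiff : u + t • d - (u + s • d) = (t - s) • d := by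
        rw [sub_smul]; abel
      rw [hdiff] at hmo
      have h1 : ⟪w' (u + t • d) - w' (u + s • d), (t - s) • d⟫
          = (t - s) * ⟪w' (u + t • d) - w' (u + s • d), d⟫ :=
        real_inner_smul_right _ _ _
      rw [h1] at hmo
      have h2 : ⟪w' (u + t • d) - w' (u + s • d), d⟫
          = ⟪w' (u + t • d), d⟫ - ⟪w' (u + s • d), d⟫ := inner_sub_left _ _ _
      nlinarith [hmo]
  have hcomb := hqc.2 (Set.left_mem_Icc.2 zero_le_one) (Set.right_mem_Icc.2 zero_le_one)
      ha hb hab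
  have h0 : q 0 = w u := by simp [hq]
  have h1 : q 1 = w v := by simp [hq, hd]
  simp only [smul_eq_mul, mul_zero, mul_one, zero_add, h0, h1] at hcomb
  have hx : a • u + b • v = u + b • d := by
    have ha' : a = 1 - b := by linarith
    rw [ha', hd, smul_sub, sub_smul, one_smul]; abel
  rw [hx]
  simp only [smul_eq_mul]
  exact hcomb

theorem pdg_vi (X : Set E) (hXconvex : Convex ℝ X) (h w : E → ℝ) (w' : E → E)
    (hhconv : ConvexOn ℝ X h) (hw : ∀ u, HasGradientAt w (w' u) u)
    (μ ηt : ℝ) (γ p q : E) (hq : q ∈ X)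
    (hmin : ∀ u ∈ X, ⟪γ, q⟫ + h q + μ * w q + ηt * (w q - w p - ⟪w' p, q - p⟫) ≤
                    ⟪γ, u⟫ + h u + μ * w u + ηt * (w u - w p - ⟪w' p, u - p⟫))
    (u : E) (hu : u ∈ X) :
    0 ≤ ⟪γ, u - q⟫ + (h u - h q) + μ * ⟪w' q, u - q⟫ + ηt * (⟪w' q, u - q⟫ - ⟪w' p, u - q⟫) := by
  set d := u - q with hd
  set G : ℝ → ℝ := fun s => ⟪γ, q + s • d⟫ + μ * w (q + s • d)
      + ηt * (w (q + s • d) - w p - ⟪w' p, q + s • d - p⟫) with hG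
  have hmem : ∀ s : ℝ, s ∈ Set.Ioc (0:ℝ) 1 → q + s • d ∈ X := by
    intro s hs
    have : q + s • d = (1 - s) • q + s • u := by
      rw [hd, smul_sub, sub_smul, one_smul]; abel
    rw [this]
    exact hXconvex hq hu (by linarith [hs.2]) hs.1.le (by ring)
  have hinner1 : HasDerivAt (fun s : ℝ => ⟪γ, q + s • d⟫) ⟪γ, d⟫ 0 := by
    have : (fun s : ℝ => ⟪γ, q + s • d⟫) = fun s => ⟪γ, q⟫ + s * ⟪γ, d⟫ := by
      funext s; rw [inner_add_right, real_inner_smul_right]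
    rw [this]
    simpa using ((hasDerivAt_id (0:ℝ)).mul_const ⟪γ, d⟫).const_add ⟪γ, q⟫
  have hinner2 : HasDerivAt (fun s : ℝ => ⟪w' p, q + s • d - p⟫) ⟪w' p, d⟫ 0 := by
    have : (fun s : ℝ => ⟪w' p, q + s • d - p⟫) = fun s => ⟪w' p, q - p⟫ + s * ⟪w' p, d⟫ := by
      funext s
      rw [show q + s • d - p = (q - p) + s • d by abel, inner_add_right, real_inner_smul_right]
    rw [this]
    simpa using ((hasDerivAt_id (0:ℝ)).mul_const ⟪w' p, d⟫).const_add ⟪w' p, q - p⟫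
  have hwline : HasDerivAt (fun s : ℝ => w (q + s • d)) ⟪w' q, d⟫ 0 := by
    simpa using pdg_line_hasDerivAt w w' hw q d 0
  have hGder : HasDerivAt G
      (⟪γ, d⟫ + μ * ⟪w' q, d⟫ + ηt * (⟪w' q, d⟫ - (0:ℝ) - ⟪w' p, d⟫)) 0 := by
    exact (hinner1.add ((hwline.const_mul μ))).add
      (((hwline.sub (hasDerivAt_const 0 (w p))).sub hinner2).const_mul ηt)
  have hkey : -(⟪γ, d⟫ + μ * ⟪w' q, d⟫ + ηt * (⟪w' q, d⟫ - (0:ℝ) - ⟪w' p, d⟫)) ≤ h u - h q := by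
    apply pdg_slope_limit (fun s => -(G s)) _ _ (hGder.neg)
    intro s hs
    have hmem' := hmem s hs
    have hmin' := hmin _ hmem'
    have hconv := hhconv.2 hq hu (by linarith [hs.2] : (0:ℝ) ≤ 1 - s) hs.1.le (by ring)
    have hcomb : q + s • d = (1 - s) • q + s • u := by
      rw [hd, smul_sub, sub_smul, one_smul]; abel
    rw [← hcomb] at hconv
    simp only [smul_eq_mul] at hconv
    have hG0 : G 0 = ⟪γ, q⟫ + μ * w q + ηt * (w q - w p - ⟪w' p, q - p⟫) := by
      simp [hG]
    have hGs : ⟪γ, q⟫ + h q + μ * w q + ηt * (w q - w p - ⟪w' p, q - p⟫)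
        ≤ G s + h (q + s • d) := by
      have := hmin' ; simp only [hG]; linarith [this]
    have : -(G s) - -(G 0) ≤ h (q + s • d) - h q := by
      rw [hG0] at *; linarith [hGs]
    calc -(G s) - -(G 0) ≤ h (q + s • d) - h q := this
      _ ≤ s * (h u - h q) := by linarith [hconv]
  have hin : ⟪w' q - w' p, d⟫ = ⟪w' q, d⟫ - ⟪w' p, d⟫ := inner_sub_left _ _ _
  rw [hd] at *
  linarith [hkey]

theorem pdg_primal_threept (X : Set E) (hXconvex : Convex ℝ X) (h w : E → ℝ) (w' : E → E)
    (hhconv : ConvexOn ℝ X h) (hw : ∀ u, HasGradientAt w (w' u) u)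
    (μ ηt : ℝ) (γ p q : E) (hq : q ∈ X)
    (hmin : ∀ u ∈ X, ⟪γ, q⟫ + h q + μ * w q + ηt * (w q - w p - ⟪w' p, q - p⟫) ≤
                    ⟪γ, u⟫ + h u + μ * w u + ηt * (w u - w p - ⟪w' p, u - p⟫))
    (u : E) (hu : u ∈ X) :
    ⟪γ, q - u⟫ + (h q - h u) + μ * (w q - w u) ≤
      ηt * ((w u - w p - ⟪w' p, u - p⟫) - (w q - w p - ⟪w' p, q - p⟫))
      - (μ + ηt) * (w u - w q - ⟪w' q, u - q⟫) := by
  have hvi := pdg_vi X hXconvex h w w' hhconv hw μ ηt γ p q hq hmin u hu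
  have e1 : ⟪γ, q - u⟫ = -⟪γ, u - q⟫ := by
    rw [show q - u = -(u - q) by abel, inner_neg_right]
  have e2 : ⟪w' p, u - p⟫ = ⟪w' p, u - q⟫ + ⟪w' p, q - p⟫ := by
    rw [show u - p = (u - q) + (q - p) by abel, inner_add_right]
  rw [e1, e2]
  ring_nf
  ring_nf at hvi
  linarith [hvi]

theorem pdg_young (S θm ηm Lf A W : ℝ) (Δx Δg : E)
    (hS : 0 ≤ S) (hθm : 0 ≤ θm) (hηm : 0 ≤ ηm) (hLf : 0 ≤ Lf)
    (hcond : 2 * Lf * θm ≤ ηm * S)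
    (hA : (1/4) * ‖Δx‖ ^ 2 ≤ A)
    (hW : ∀ d : E, ⟪d, Δg⟫ - Lf / 2 * ‖d‖ ^ 2 ≤ W)
    (hdeg : S = 0 → θm * ‖Δg‖ = 0) :
    θm * ⟪Δx, Δg⟫ ≤ θm * ηm * A + S * W := by
  have hW0 : 0 ≤ W := by have := hW 0; simpa using this
  have hN : (0:ℝ) ≤ ‖Δx‖ ^ 2 := sq_nonneg _
  have hA0 : 0 ≤ A := le_trans (by positivity) hA
  rcases eq_or_lt_of_le hS with hS0 | hSpos
  · have hdeg' := hdeg hS0.symm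
    have hCS : ⟪Δx, Δg⟫ ≤ ‖Δx‖ * ‖Δg‖ := real_inner_le_norm _ _
    have : θm * ⟪Δx, Δg⟫ ≤ ‖Δx‖ * (θm * ‖Δg‖) := by
      nlinarith [norm_nonneg Δx, norm_nonneg Δg]
    rw [hdeg'] at this
    rw [← hS0]
    nlinarith [mul_nonneg (mul_nonneg hθm hηm) hA0]
  · set c := θm / S with hc
    have hc0 : 0 ≤ c := div_nonneg hθm hSpos.le
    have hθeq : θm = c * S := by rw [hc, div_mul_cancel₀ _ hSpos.ne']
    have h1 := hW (c • Δx)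
    rw [real_inner_smul_left, norm_smul, Real.norm_eq_abs, mul_pow, sq_abs] at h1
    have hηc : 2 * Lf * c ≤ ηm := by
      rw [hθeq] at hcond
      have := (mul_le_mul_iff_of_pos_right hSpos).mp (by nlinarith [hcond] : (2 * Lf * c) * S ≤ ηm * S)
      exact this
    have h2 : c * S * ⟪Δx, Δg⟫ - Lf / 2 * (c ^ 2 * ‖Δx‖ ^ 2) * S ≤ S * W := by
      nlinarith [h1, hSpos]
    rw [hθeq]
    nlinarith [mul_le_mul_of_nonneg_left hA (mul_nonneg (mul_nonneg hc0 hSpos.le) hηm),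
      mul_le_mul_of_nonneg_right hηc (mul_nonneg (mul_nonneg hc0 hSpos.le) hN)]

set_option maxHeartbeats 2000000 in
theorem pdg_master_inequality
    {n : ℕ} (X : Set (EuclideanSpace ℝ (Fin n)))
    (hXne : X.Nonempty) (hXclosed : IsClosed X) (hXconvex : Convex ℝ X)
    (f h w : EuclideanSpace ℝ (Fin n) → ℝ)
    (f' w' : EuclideanSpace ℝ (Fin n) → EuclideanSpace ℝ (Fin n))
    (μ Lf : ℝ) (hμ : 0 ≤ μ) (hLf : 0 ≤ Lf)
    (hfconv : ConvexOn ℝ Set.univ f)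
    (hfdiff : ∀ u, HasGradientAt f (f' u) u)
    (hfLip : ∀ u v, ‖f' u - f' v‖ ≤ Lf * ‖u - v‖)
    (hhconv : ConvexOn ℝ X h)
    (hwdiff : ∀ u, HasGradientAt w (w' u) u)
    (hwstrong : ∀ u ∈ X, ∀ v ∈ X, (1 / 2) * ‖u - v‖ ^ 2 ≤ ⟪w' u - w' v, u - v⟫)
    (P : EuclideanSpace ℝ (Fin n) → EuclideanSpace ℝ (Fin n) → ℝ)
    (hP : ∀ x' xx, P x' xx = w xx - w x' - ⟪w' x', xx - x'⟫)
    (J : EuclideanSpace ℝ (Fin n) → ℝ)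
    (hJ : ∀ g, J g = ⨆ u, (⟪u, g⟫ - f u))
    (Q : (EuclideanSpace ℝ (Fin n) × EuclideanSpace ℝ (Fin n)) →
         (EuclideanSpace ℝ (Fin n) × EuclideanSpace ℝ (Fin n)) → ℝ)
    (hQ : ∀ zb z, Q zb z =
      (h zb.1 + μ * w zb.1 + ⟪zb.1, z.2⟫ - J z.2)
      - (h z.1 + μ * w z.1 + ⟪z.1, zb.2⟫ - J zb.2))
    (k : ℕ) (hk : 1 ≤ k)
    (τ η α θ : ℕ → ℝ)
    (hτnn : ∀ t, 1 ≤ t → t ≤ k → 0 ≤ τ t)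
    (hηpos : ∀ t, 1 ≤ t → t ≤ k → 0 < η t)
    (hαnn : ∀ t, 1 ≤ t → t ≤ k → 0 ≤ α t)
    (hθnn : ∀ t, 1 ≤ t → t ≤ k → 0 ≤ θ t)
    (hcond1 : ∀ t, 2 ≤ t → t ≤ k → θ t * τ t ≤ θ (t - 1) * (1 + τ (t - 1)))
    (hcond2 : ∀ t, 2 ≤ t → t ≤ k → θ t * η t ≤ θ (t - 1) * (μ + η (t - 1)))
    (hcond3 : ∀ t, 2 ≤ t → t ≤ k → 2 * Lf * α t ≤ η (t - 1) * τ t)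
    (hcond4 : 2 * Lf ≤ η k * (1 + τ k))
    (hcond5 : ∀ t, 2 ≤ t → t ≤ k → α t * θ t = θ (t - 1))
    (x xt xu g : ℕ → EuclideanSpace ℝ (Fin n))
    (hx0 : x 0 ∈ X)
    (hxu0 : xu 0 = x 0)
    (hg0 : g 0 = f' (x 0))
    (hxt : ∀ t, 1 ≤ t → t ≤ k → xt t = α t • (x (t - 1) - x (t - 2)) + x (t - 1))
    (hxu : ∀ t, 1 ≤ t → t ≤ k → xu t = (1 + τ t)⁻¹ • (xt t + τ t • xu (t - 1)))
    (hg : ∀ t, 1 ≤ t → t ≤ k → g t = f' (xu t))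
    (hxmem : ∀ t, 1 ≤ t → t ≤ k → x t ∈ X)
    (hxmin : ∀ t, 1 ≤ t → t ≤ k → ∀ u ∈ X,
      ⟪g t, x t⟫ + h (x t) + μ * w (x t) + η t * P (x (t - 1)) (x t) ≤
        ⟪g t, u⟫ + h u + μ * w u + η t * P (x (t - 1)) u)
    (xbar gbar : EuclideanSpace ℝ (Fin n))
    (hxbar : xbar = (∑ t ∈ Finset.Icc 1 k, θ t)⁻¹ • ∑ t ∈ Finset.Icc 1 k, θ t • x t)
    (hgbar : gbar = (∑ t ∈ Finset.Icc 1 k, θ t)⁻¹ • ∑ t ∈ Finset.Icc 1 k, θ t • g t)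
    (xx : EuclideanSpace ℝ (Fin n)) (hxx : xx ∈ X)
    (gg : EuclideanSpace ℝ (Fin n))
    (hgg : BddAbove (Set.range fun u => ⟪u, gg⟫ - f u)) :
    (∑ t ∈ Finset.Icc 1 k, θ t) * Q (xbar, gbar) (xx, gg)
        + θ k * (μ + η k) * P (x k) xx
      ≤ θ 1 * η 1 * P (x 0) xx
        + θ 1 * τ 1 * (J gg - J (g 0) - ⟪x 0, gg - g 0⟫) := by
  
  classical
  -- basic facts about J at gradient points
  have hJgrad : ∀ p : EuclideanSpace ℝ (Fin n), J (f' p) = ⟪p, f' p⟫ - f p := by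
    intro p
    rw [hJ]
    have hub : ∀ u : EuclideanSpace ℝ (Fin n), ⟪u, f' p⟫ - f u ≤ ⟪p, f' p⟫ - f p := by
      intro u
      have hgl := pdg_grad_le f f' hfconv hfdiff p u
      have e1 : ⟪f' p, u - p⟫ = ⟪f' p, u⟫ - ⟪f' p, p⟫ := inner_sub_right _ _ _
      have e2 : ⟪f' p, u⟫ = ⟪u, f' p⟫ := real_inner_comm _ _
      have e3 : ⟪f' p, p⟫ = ⟪p, f' p⟫ := real_inner_comm _ _
      linarith [hgl]
    apply le_antisymm
    · exact ciSup_le hub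
    · exact le_ciSup ⟨⟪p, f' p⟫ - f p, Set.forall_mem_range.2 hub⟩ p
  have hggle : ∀ u : EuclideanSpace ℝ (Fin n), ⟪u, gg⟫ - f u ≤ J gg := by
    intro u; rw [hJ]; exact le_ciSup hgg u
  -- g t is the gradient at xu t
  have hgfp : ∀ t, t ≤ k → g t = f' (xu t) := by
    intro t htk
    rcases Nat.eq_zero_or_pos t with rfl | ht1
    · rw [hg0, hxu0]
    · exact hg t ht1 htk
  have hgood : ∀ t, t ≤ k → ∀ u : EuclideanSpace ℝ (Fin n), ⟪u, g t⟫ - f u ≤ J (g t) := by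
    intro t htk u
    rw [hgfp t htk, hJgrad]
    have hgl := pdg_grad_le f f' hfconv hfdiff (xu t) u
    have e1 : ⟪f' (xu t), u - xu t⟫ = ⟪f' (xu t), u⟫ - ⟪f' (xu t), xu t⟫ := inner_sub_right _ _ _
    have e2 : ⟪f' (xu t), u⟫ = ⟪u, f' (xu t)⟫ := real_inner_comm _ _
    have e3 : ⟪f' (xu t), xu t⟫ = ⟪xu t, f' (xu t)⟫ := real_inner_comm _ _
    linarith [hgl]
  have hJval : ∀ t, t ≤ k → J (g t) = ⟪xu t, g t⟫ - f (xu t) := by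
    intro t htk
    rw [hgfp t htk, hJgrad]
  -- the dual Bregman distance
  set Wd : ℕ → EuclideanSpace ℝ (Fin n) → ℝ := fun t G => J G - J (g t) - ⟪xu t, G - g t⟫ with hWdDef
  have hWnn : ∀ t, t ≤ k → ∀ G : EuclideanSpace ℝ (Fin n), (∀ u : EuclideanSpace ℝ (Fin n), ⟪u, G⟫ - f u ≤ J G) → 0 ≤ Wd t G := by
    intro t htk G hG
    have h1 := hG (xu t)
    have h2 := hJval t htk
    have e1 : ⟪xu t, G - g t⟫ = ⟪xu t, G⟫ - ⟪xu t, g t⟫ := inner_sub_right _ _ _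
    simp only [hWdDef]
    linarith [h1]
  have hWlb : ∀ t, t ≤ k → ∀ G : EuclideanSpace ℝ (Fin n), (∀ u : EuclideanSpace ℝ (Fin n), ⟪u, G⟫ - f u ≤ J G) →
      ∀ d : EuclideanSpace ℝ (Fin n), ⟪d, G - g t⟫ - Lf / 2 * ‖d‖ ^ 2 ≤ Wd t G := by
    intro t htk G hG d
    have h1 := hG (xu t + d)
    have hdesc := pdg_descent f f' Lf hLf hfdiff hfLip (xu t) (xu t + d)
    have e0 : xu t + d - xu t = d := by abel
    rw [e0] at hdesc
    have h2 := hJval t htk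
    have e1 : ⟪xu t + d, G⟫ = ⟪xu t, G⟫ + ⟪d, G⟫ := inner_add_left _ _ _
    have e2 : ⟪xu t, G - g t⟫ = ⟪xu t, G⟫ - ⟪xu t, g t⟫ := inner_sub_right _ _ _
    have e3 : ⟪d, G - g t⟫ = ⟪d, G⟫ - ⟪d, g t⟫ := inner_sub_right _ _ _
    have e4 : ⟪f' (xu t), d⟫ = ⟪d, g t⟫ := by
      rw [hgfp t htk]; exact real_inner_comm _ _
    simp only [hWdDef]
    linarith [h1, hdesc]
  -- Bregman distance P lower bounds
  have hPlb : ∀ u ∈ X, ∀ v ∈ X, (1/4) * ‖u - v‖ ^ 2 ≤ P v u := by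
    intro u hu v hv
    rw [hP]
    exact pdg_strong_lower X hXconvex w w' hwdiff hwstrong u v hu hv
  have hPnn : ∀ u ∈ X, ∀ v ∈ X, 0 ≤ P v u := by
    intro u hu v hv
    exact le_trans (by positivity) (hPlb u hu v hv)
  -- membership of iterates
  have hxmem' : ∀ t, t ≤ k → x t ∈ X := by
    intro t htk
    rcases Nat.eq_zero_or_pos t with rfl | ht1
    · exact hx0
    · exact hxmem t ht1 htk
  -- primal three-point inequality
  have hprimal : ∀ t, 1 ≤ t → t ≤ k → ∀ u ∈ X,
      ⟪g t, x t - u⟫ + (h (x t) - h u) + μ * (w (x t) - w u) ≤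
        η t * (P (x (t-1)) u - P (x (t-1)) (x t)) - (μ + η t) * P (x t) u := by
    intro t ht1 htk u hu
    have hmin' : ∀ v ∈ X, ⟪g t, x t⟫ + h (x t) + μ * w (x t)
        + η t * (w (x t) - w (x (t-1)) - ⟪w' (x (t-1)), x t - x (t-1)⟫) ≤
        ⟪g t, v⟫ + h v + μ * w v
        + η t * (w v - w (x (t-1)) - ⟪w' (x (t-1)), v - x (t-1)⟫) := by
      intro v hv
      have hmm := hxmin t ht1 htk v hv
      rw [hP (x (t-1)) (x t), hP (x (t-1)) v] at hmm
      exact hmm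
    have h3 := pdg_primal_threept X hXconvex h w w' hhconv hwdiff μ (η t) (g t)
      (x (t-1)) (x t) (hxmem t ht1 htk) hmin' u hu
    rw [hP (x (t-1)) u, hP (x (t-1)) (x t), hP (x t) u]
    exact h3
  -- dual step identity
  have hdual : ∀ t, 1 ≤ t → t ≤ k → ∀ G : EuclideanSpace ℝ (Fin n),
      ⟪xt t, G - g t⟫ + J (g t) - J G =
        τ t * Wd (t-1) G - (1 + τ t) * Wd t G - τ t * Wd (t-1) (g t) := by
    intro t ht1 htk G
    have hτ0 : (0:ℝ) < 1 + τ t := by linarith [hτnn t ht1 htk]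
    have hxu' : (1 + τ t) • xu t = xt t + τ t • xu (t-1) := by
      rw [hxu t ht1 htk, smul_inv_smul₀ (ne_of_gt hτ0)]
    have e0 : ⟪(1 + τ t) • xu t, G - g t⟫ = ⟪xt t + τ t • xu (t-1), G - g t⟫ := by rw [hxu']
    rw [real_inner_smul_left, inner_add_left, real_inner_smul_left] at e0
    have e1 : ⟪xu (t-1), G - g (t-1)⟫ = ⟪xu (t-1), G - g t⟫ + ⟪xu (t-1), g t - g (t-1)⟫ := by
      rw [← inner_add_right]; congr 1; abel
    simp only [hWdDef]
    linear_combination (-1 : ℝ) * e0 + τ t * e1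
  -- per-step inequality
  have hstep : ∀ t, 1 ≤ t → t ≤ k →
      Q (x t, g t) (xx, gg) ≤
        η t * (P (x (t-1)) xx - P (x (t-1)) (x t)) - (μ + η t) * P (x t) xx
        + τ t * Wd (t-1) gg - (1 + τ t) * Wd t gg - τ t * Wd (t-1) (g t)
        + ⟪x t - x (t-1), gg - g t⟫
        - α t * ⟪x (t-1) - x (t-2), gg - g (t-1)⟫
        + α t * ⟪x (t-1) - x (t-2), g t - g (t-1)⟫ := by
    intro t ht1 htk
    have hpri := hprimal t ht1 htk xx hxx
    have hdu := hdual t ht1 htk gg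
    have a1 : ⟪x t - xx, g t⟫ = ⟪x t, g t⟫ - ⟪xx, g t⟫ := inner_sub_left _ _ _
    have a2 : ⟪x t, gg - g t⟫ = ⟪x t, gg⟫ - ⟪x t, g t⟫ := inner_sub_right _ _ _
    have a3 : ⟪g t, x t - xx⟫ = ⟪x t - xx, g t⟫ := real_inner_comm _ _
    have b2 : x t - xt t = (x t - x (t-1)) - α t • (x (t-1) - x (t-2)) := by
      rw [hxt t ht1 htk]; abel
    have b3 : ⟪x t - xt t, gg - g t⟫ = ⟪x t, gg - g t⟫ - ⟪xt t, gg - g t⟫ :=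
      inner_sub_left _ _ _
    have b4 : ⟪(x t - x (t-1)) - α t • (x (t-1) - x (t-2)), gg - g t⟫
        = ⟪x t - x (t-1), gg - g t⟫ - α t * ⟪x (t-1) - x (t-2), gg - g t⟫ := by
      rw [inner_sub_left, real_inner_smul_left]
    rw [b2, b4] at b3
    have d3 : ⟪x (t-1) - x (t-2), gg - g t⟫
        = ⟪x (t-1) - x (t-2), gg - g (t-1)⟫ - ⟪x (t-1) - x (t-2), g t - g (t-1)⟫ := by
      rw [← inner_sub_right]; congr 1; abel
    have d3' : α t * ⟪x (t-1) - x (t-2), gg - g t⟫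
        = α t * ⟪x (t-1) - x (t-2), gg - g (t-1)⟫
          - α t * ⟪x (t-1) - x (t-2), g t - g (t-1)⟫ := by rw [d3]; ring
    rw [hQ]
    dsimp only
    linarith [hpri, hdu, a1, a2, a3, b3, d3']
  -- telescoped inequality by induction
  have hIH : ∀ m, 1 ≤ m → m ≤ k →
      ∑ t ∈ Finset.Icc 1 m, θ t * Q (x t, g t) (xx, gg) ≤
        θ 1 * η 1 * P (x 0) xx + θ 1 * τ 1 * Wd 0 gg
        - θ m * (μ + η m) * P (x m) xx - θ m * (1 + τ m) * Wd m gg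
        - θ m * η m * P (x (m-1)) (x m)
        + θ m * ⟪x m - x (m-1), gg - g m⟫ := by
    intro m hm1
    induction m, hm1 using Nat.le_induction with
    | base =>
      intro h1k
      have hs := hstep 1 le_rfl h1k
      rw [Finset.Icc_self, Finset.sum_singleton]
      have hW1 : 0 ≤ Wd 0 (g 1) := hWnn 0 (Nat.zero_le k) (g 1) (hgood 1 h1k)
      have hθ1 := hθnn 1 le_rfl h1k
      have hτ1 := hτnn 1 le_rfl h1k
      have hmul := mul_le_mul_of_nonneg_left hs hθ1
      have hdrop : 0 ≤ θ 1 * τ 1 * Wd 0 (g 1) := mul_nonneg (mul_nonneg hθ1 hτ1) hW1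
      simp only [show (1:ℕ)-1 = 0 from rfl, show (1:ℕ)-2 = 0 from rfl, sub_self,
        inner_zero_left, mul_zero, add_zero, sub_zero] at hmul ⊢
      nlinarith [hmul, hdrop]
    | succ m hm ih =>
      intro hm1k
      have hmk : m ≤ k := le_trans (Nat.le_succ m) hm1k
      have hIHm := ih hmk
      have hm2 : 2 ≤ m + 1 := by omega
      have hs := hstep (m+1) (by omega) hm1k
      have hθm1 := hθnn (m+1) (by omega) hm1k
      have hθm := hθnn m hm hmk
      have hτm1 := hτnn (m+1) (by omega) hm1k
      have hηm := hηpos m hm hmk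
      have hα : α (m+1) * θ (m+1) = θ m := by
        have := hcond5 (m+1) hm2 hm1k
        simpa using this
      have hc3 : 2 * Lf * α (m+1) ≤ η m * τ (m+1) := by
        have := hcond3 (m+1) hm2 hm1k
        simpa using this
      have hmul := mul_le_mul_of_nonneg_left hs hθm1
      have hidx : m + 1 - 2 = m - 1 := by omega
      simp only [Nat.add_sub_cancel, hidx] at hmul
      -- convert α-weighted cross terms using hα
      have hc1 : θ (m+1) * (α (m+1) * ⟪x m - x (m-1), gg - g m⟫)
          = θ m * ⟪x m - x (m-1), gg - g m⟫ := by rw [← hα]; ring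
      have hc2 : θ (m+1) * (α (m+1) * ⟪x m - x (m-1), g (m+1) - g m⟫)
          = θ m * ⟪x m - x (m-1), g (m+1) - g m⟫ := by rw [← hα]; ring
      -- telescoping bounds
      have hT1 : θ (m+1) * η (m+1) * P (x m) xx ≤ θ m * (μ + η m) * P (x m) xx := by
        have hcc := hcond2 (m+1) hm2 hm1k
        simp only [Nat.add_sub_cancel] at hcc
        exact mul_le_mul_of_nonneg_right hcc (hPnn xx hxx (x m) (hxmem' m hmk))
      have hT2 : θ (m+1) * τ (m+1) * Wd m gg ≤ θ m * (1 + τ m) * Wd m gg := by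
        have hcc := hcond1 (m+1) hm2 hm1k
        simp only [Nat.add_sub_cancel] at hcc
        exact mul_le_mul_of_nonneg_right hcc (hWnn m hmk gg hggle)
      -- absorption of the cross term
      have hyoung : θ m * ⟪x m - x (m-1), g (m+1) - g m⟫ ≤
          θ m * η m * P (x (m-1)) (x m) + (θ (m+1) * τ (m+1)) * Wd m (g (m+1)) := by
        apply pdg_young (θ (m+1) * τ (m+1)) (θ m) (η m) Lf
          (P (x (m-1)) (x m)) (Wd m (g (m+1))) (x m - x (m-1)) (g (m+1) - g m)
          (mul_nonneg hθm1 hτm1) hθm hηm.le hLf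
        · -- 2 * Lf * θ m ≤ η m * (θ (m+1) * τ (m+1))
          have h1 := mul_le_mul_of_nonneg_right hc3 hθm1
          rw [← hα]; nlinarith [h1]
        · -- 1/4 ‖Δx‖² ≤ P
          have := hPlb (x m) (hxmem' m hmk) (x (m-1)) (hxmem' (m-1) (le_trans (Nat.sub_le m 1) hmk))
          exact this
        · -- lower bound on Wd
          exact hWlb m hmk (g (m+1)) (hgood (m+1) hm1k)
        · -- degenerate case
          intro h0
          rcases mul_eq_zero.1 h0 with hθ0 | hτ0
          · have : θ m = 0 := by rw [← hα, hθ0]; ring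
            rw [this]; ring
          · rw [hτ0, mul_zero] at hc3
            have hLα : Lf * α (m+1) = 0 := by
              have hα1 := hαnn (m+1) (by omega) hm1k
              nlinarith [hc3, hLf, hα1]
            rcases mul_eq_zero.1 hLα with hLf0 | hα0
            · have hgeq : ‖g (m+1) - g m‖ = 0 := by
                rw [hgfp (m+1) hm1k, hgfp m hmk]
                have := hfLip (xu (m+1)) (xu m)
                rw [hLf0, zero_mul] at this
                exact le_antisymm this (norm_nonneg _)
              rw [hgeq]; ring
            · have : θ m = 0 := by rw [← hα, hα0]; ring
              rw [this]; ring
      -- sum over Icc 1 (m+1)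
      rw [Finset.sum_Icc_succ_top (by omega : 1 ≤ m + 1)]
      simp only [Nat.add_sub_cancel]
      linarith [hIHm, hmul, hc1, hc2, hT1, hT2, hyoung]
  -- summed inequality with final absorption
  have hθk := hθnn k hk le_rfl
  have hτk := hτnn k hk le_rfl
  have hsumQ : ∑ t ∈ Finset.Icc 1 k, θ t * Q (x t, g t) (xx, gg)
      + θ k * (μ + η k) * P (x k) xx ≤
      θ 1 * η 1 * P (x 0) xx + θ 1 * τ 1 * Wd 0 gg := by
    have hIHk := hIH k hk le_rfl
    have hyoungk : θ k * ⟪x k - x (k-1), gg - g k⟫ ≤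
        θ k * η k * P (x (k-1)) (x k) + (θ k * (1 + τ k)) * Wd k gg := by
      apply pdg_young (θ k * (1 + τ k)) (θ k) (η k) Lf
        (P (x (k-1)) (x k)) (Wd k gg) (x k - x (k-1)) (gg - g k)
        (mul_nonneg hθk (by linarith)) hθk (hηpos k hk le_rfl).le hLf
      · nlinarith [mul_le_mul_of_nonneg_left hcond4 hθk]
      · exact hPlb (x k) (hxmem' k le_rfl) (x (k-1)) (hxmem' (k-1) (Nat.sub_le k 1))
      · exact hWlb k le_rfl gg hggle
      · intro h0
        have hτpos : (0:ℝ) < 1 + τ k := by linarith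
        have hθk0 : θ k = 0 := by
          rcases mul_eq_zero.1 h0 with h' | h'
          · exact h'
          · exact absurd h' (ne_of_gt hτpos)
        rw [hθk0]; ring
    linarith [hIHk, hyoungk]
  have hWd0 : Wd 0 gg = J gg - J (g 0) - ⟪x 0, gg - g 0⟫ := by
    simp only [hWdDef, hxu0]
  have hθmem : ∀ t ∈ Finset.Icc 1 k, 0 ≤ θ t :=
    fun t ht => hθnn t (Finset.mem_Icc.1 ht).1 (Finset.mem_Icc.1 ht).2
  rcases eq_or_lt_of_le (Finset.sum_nonneg hθmem) with hΘ0 | hΘpos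
  · -- degenerate case: all weights vanish
    have hall := (Finset.sum_eq_zero_iff_of_nonneg hθmem).1 hΘ0.symm
    have hθ1 : θ 1 = 0 := hall 1 (Finset.mem_Icc.2 ⟨le_rfl, hk⟩)
    have hθk0 : θ k = 0 := hall k (Finset.mem_Icc.2 ⟨hk, le_rfl⟩)
    rw [← hΘ0, hθ1, hθk0]
    simp
  · -- main case
    have hΘinv : (0:ℝ) ≤ (∑ t ∈ Finset.Icc 1 k, θ t)⁻¹ := inv_nonneg.2 hΘpos.le
    have hΘne : (∑ t ∈ Finset.Icc 1 k, θ t) ≠ 0 := ne_of_gt hΘpos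
    have hmulinv : ∀ S : ℝ, (∑ t ∈ Finset.Icc 1 k, θ t)
        * ((∑ t ∈ Finset.Icc 1 k, θ t)⁻¹ * S) = S := by
      intro S; field_simp
    have hmemX : ∀ t ∈ Finset.Icc 1 k, x t ∈ X :=
      fun t ht => hxmem' t (Finset.mem_Icc.1 ht).2
    have hwconv : ConvexOn ℝ X w := pdg_convexOn X hXconvex w w' hwdiff
      (fun u hu v hv => le_trans (by positivity) (hwstrong u hu v hv))
    have hxbarC : xbar = (Finset.Icc 1 k).centerMass θ x := by
      rw [hxbar]; rfl
    have hcm : ∀ φ : EuclideanSpace ℝ (Fin n) → ℝ, ConvexOn ℝ X φ →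
        (∑ t ∈ Finset.Icc 1 k, θ t) * φ xbar ≤ ∑ t ∈ Finset.Icc 1 k, θ t * φ (x t) := by
      intro φ hφ
      have h1 := hφ.map_centerMass_le hθmem hΘpos hmemX
      rw [← hxbarC] at h1
      have h2 : (Finset.Icc 1 k).centerMass θ (φ ∘ x)
          = (∑ t ∈ Finset.Icc 1 k, θ t)⁻¹ * ∑ t ∈ Finset.Icc 1 k, θ t * φ (x t) := by
        simp [Finset.centerMass, smul_eq_mul, Function.comp]
      rw [h2] at h1
      have h3 := mul_le_mul_of_nonneg_left h1 hΘpos.le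
      rwa [hmulinv] at h3
    have havgh := hcm h hhconv
    have havgw := hcm w hwconv
    have hinxbar : (∑ t ∈ Finset.Icc 1 k, θ t) * ⟪xbar, gg⟫
        = ∑ t ∈ Finset.Icc 1 k, θ t * ⟪x t, gg⟫ := by
      have e1 : ⟪xbar, gg⟫ = (∑ t ∈ Finset.Icc 1 k, θ t)⁻¹
          * ∑ t ∈ Finset.Icc 1 k, θ t * ⟪x t, gg⟫ := by
        rw [hxbar, real_inner_smul_left, sum_inner]
        congr 1
        exact Finset.sum_congr rfl (fun t _ => real_inner_smul_left _ _ _)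
      rw [e1, hmulinv]
    have hingbar : (∑ t ∈ Finset.Icc 1 k, θ t) * ⟪xx, gbar⟫
        = ∑ t ∈ Finset.Icc 1 k, θ t * ⟪xx, g t⟫ := by
      have e1 : ⟪xx, gbar⟫ = (∑ t ∈ Finset.Icc 1 k, θ t)⁻¹
          * ∑ t ∈ Finset.Icc 1 k, θ t * ⟪xx, g t⟫ := by
        rw [hgbar, real_inner_smul_right, inner_sum]
        congr 1
        exact Finset.sum_congr rfl (fun t _ => real_inner_smul_right _ _ _)
      rw [e1, hmulinv]
    have hJbar : (∑ t ∈ Finset.Icc 1 k, θ t) * J gbar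
        ≤ ∑ t ∈ Finset.Icc 1 k, θ t * J (g t) := by
      have hle : J gbar ≤ (∑ t ∈ Finset.Icc 1 k, θ t)⁻¹
          * ∑ t ∈ Finset.Icc 1 k, θ t * J (g t) := by
        rw [hJ]
        apply ciSup_le
        intro u
        have e1 : ⟪u, gbar⟫ = (∑ t ∈ Finset.Icc 1 k, θ t)⁻¹
            * ∑ t ∈ Finset.Icc 1 k, θ t * ⟪u, g t⟫ := by
          rw [hgbar, real_inner_smul_right, inner_sum]
          congr 1
          exact Finset.sum_congr rfl (fun t _ => real_inner_smul_right _ _ _)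
        have e2 : ∑ t ∈ Finset.Icc 1 k, θ t * ⟪u, g t⟫
            - (∑ t ∈ Finset.Icc 1 k, θ t) * f u
            ≤ ∑ t ∈ Finset.Icc 1 k, θ t * J (g t) := by
          rw [Finset.sum_mul, ← Finset.sum_sub_distrib]
          apply Finset.sum_le_sum
          intro t ht
          have hgt := hgood t (Finset.mem_Icc.1 ht).2 u
          have hθt := hθmem t ht
          nlinarith [mul_le_mul_of_nonneg_left hgt hθt]
        have e3 : ⟪u, gbar⟫ - f u = (∑ t ∈ Finset.Icc 1 k, θ t)⁻¹
            * (∑ t ∈ Finset.Icc 1 k, θ t * ⟪u, g t⟫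
              - (∑ t ∈ Finset.Icc 1 k, θ t) * f u) := by
          rw [e1]; field_simp
        rw [e3]
        exact le_trans (mul_le_mul_of_nonneg_left e2 hΘinv) (le_of_eq rfl)
      have h3 := mul_le_mul_of_nonneg_left hle hΘpos.le
      rwa [hmulinv] at h3
    have hQexp : ∑ t ∈ Finset.Icc 1 k, θ t * Q (x t, g t) (xx, gg)
        = ∑ t ∈ Finset.Icc 1 k, θ t * h (x t)
          + μ * ∑ t ∈ Finset.Icc 1 k, θ t * w (x t)
          + ∑ t ∈ Finset.Icc 1 k, θ t * ⟪x t, gg⟫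
          - (∑ t ∈ Finset.Icc 1 k, θ t) * J gg
          - (∑ t ∈ Finset.Icc 1 k, θ t) * h xx
          - μ * ((∑ t ∈ Finset.Icc 1 k, θ t) * w xx)
          - ∑ t ∈ Finset.Icc 1 k, θ t * ⟪xx, g t⟫
          + ∑ t ∈ Finset.Icc 1 k, θ t * J (g t) := by
      have hterm : ∀ t ∈ Finset.Icc 1 k, θ t * Q (x t, g t) (xx, gg) =
          θ t * h (x t) + μ * (θ t * w (x t)) + θ t * ⟪x t, gg⟫ - θ t * J gg
          - θ t * h xx - μ * (θ t * w xx) - θ t * ⟪xx, g t⟫ + θ t * J (g t) := by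
        intro t _
        rw [hQ]; dsimp only; ring
      rw [Finset.sum_congr rfl hterm]
      simp only [Finset.sum_add_distrib, Finset.sum_sub_distrib, ← Finset.mul_sum,
        ← Finset.sum_mul]
    have hQbar : (∑ t ∈ Finset.Icc 1 k, θ t) * Q (xbar, gbar) (xx, gg)
        ≤ ∑ t ∈ Finset.Icc 1 k, θ t * Q (x t, g t) (xx, gg) := by
      rw [hQ]
      dsimp only
      rw [hQexp]
      have hμw := mul_le_mul_of_nonneg_left havgw hμ
      nlinarith [havgh, hμw, hinxbar, hingbar, hJbar]
    rw [← hWd0]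
    linarith [hQbar, hsumQ]
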